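/- Let B be an n×n real matrix and let μ₊ be a real eigenvalue of B with 0 < μ₊ < 1 that is the largest nonnegative real eigenvalue of B. Then for every β ∈ ℝ the spectral radius of T(B,β) satisfies ρ(T(B,β)) ≥ 1 − √(1−μ₊); and if ρ(T(B,β)) = 1 − √(1−μ₊) for some β ∈ ℝ, then β = (1−√(1−μ₊))/(1+√(1−μ₊)). -/

import Mathlib

/-- `lam : ℂ` is an eigenvalue (over `ℂ`) of the square real matrix `A`. -/
def IsCEigenvalue {n : Type*} [Fintype n] (A : Matrix n n ℝ) (lam : ℂ) : Prop :=
  ∃ v : n → ℂ, v ≠ 0 ∧ (A.map (Complex.ofReal)).mulVec v = lam • v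

/-- The spectral radius of a square real matrix: the maximum modulus of its
eigenvalues over `ℂ`. -/
noncomputable def specRad {n : Type*} [Fintype n] (A : Matrix n n ℝ) : ℝ :=
  sSup {r : ℝ | ∃ lam : ℂ, IsCEigenvalue A lam ∧ r = ‖lam‖}

/-- The block matrix `T(M,β) = [[(1+β)M, −βM],[I, 0]]` (Jacobian of sAA(1)). -/
noncomputable def TAA {n : ℕ} (M : Matrix (Fin n) (Fin n) ℝ) (β : ℝ) :
    Matrix (Fin n ⊕ Fin n) (Fin n ⊕ Fin n) ℝ :=
  Matrix.fromBlocks ((1 + β) • M) ((-β) • M) (1 : Matrix (Fin n) (Fin n) ℝ) 0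

lemma eig_bound {n : Type*} [Fintype n] (A : Matrix n n ℝ) (lam : ℂ)
    (h : IsCEigenvalue A lam) : ‖lam‖ ≤ ∑ i, ∑ j, |A i j| := by
  obtain ⟨v, hv, heq⟩ := h
  obtain ⟨i0, hi0⟩ := Function.ne_iff.mp hv
  obtain ⟨i, -, hi⟩ := Finset.exists_max_image Finset.univ (fun i => ‖v i‖)
    ⟨i0, Finset.mem_univ i0⟩
  have hM : 0 < ‖v i‖ :=
    lt_of_lt_of_le (by simpa using hi0) (hi i0 (Finset.mem_univ i0))
  have hrow : ∀ j, ‖v j‖ ≤ ‖v i‖ := fun j => hi j (Finset.mem_univ j)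
  have key : ‖lam‖ * ‖v i‖ ≤ (∑ i', ∑ j, |A i' j|) * ‖v i‖ := by
    have h1 : ‖lam * v i‖ = ‖(A.map Complex.ofReal).mulVec v i‖ := by
      rw [heq]; simp
    calc ‖lam‖ * ‖v i‖ = ‖lam * v i‖ := (norm_mul _ _).symm
      _ = ‖∑ j, (A i j : ℂ) * v j‖ := by
          rw [h1]; simp [Matrix.mulVec, dotProduct, Matrix.map]
      _ ≤ ∑ j, ‖(A i j : ℂ) * v j‖ := norm_sum_le _ _
      _ ≤ ∑ j, |A i j| * ‖v i‖ := by
          apply Finset.sum_le_sum; intro j _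
          rw [norm_mul, Complex.norm_real, Real.norm_eq_abs]
          exact mul_le_mul_of_nonneg_left (hrow j) (abs_nonneg _)
      _ = (∑ j, |A i j|) * ‖v i‖ := by rw [Finset.sum_mul]
      _ ≤ (∑ i', ∑ j, |A i' j|) * ‖v i‖ := by
          apply mul_le_mul_of_nonneg_right _ (norm_nonneg _)
          exact Finset.single_le_sum (f := fun i' => ∑ j, |A i' j|)
            (fun i' _ => Finset.sum_nonneg fun j _ => abs_nonneg _) (Finset.mem_univ i)
  exact le_of_mul_le_mul_right key hM

lemma le_specRad {n : Type*} [Fintype n] (A : Matrix n n ℝ) (lam : ℂ)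
    (h : IsCEigenvalue A lam) : ‖lam‖ ≤ specRad A := by
  apply le_csSup
  · exact ⟨∑ i, ∑ j, |A i j|, fun r ⟨l, hl, hr⟩ => hr ▸ eig_bound A l hl⟩
  · exact ⟨lam, h, rfl⟩



lemma TAA_eig {n : ℕ} (B : Matrix (Fin n) (Fin n) ℝ) (β μ : ℝ) (v : Fin n → ℝ)
    (hv : v ≠ 0) (hBv : B.mulVec v = μ • v) (lam : ℂ)
    (hlam : lam ^ 2 = ((1 + β) * μ : ℝ) * lam - ((β * μ : ℝ) : ℂ)) :
    IsCEigenvalue (TAA B β) lam := by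
  set u : Fin n → ℂ := fun i => (v i : ℂ) with hu
  have hBu : ∀ i, ∑ j, (B i j : ℂ) * u j = (μ : ℂ) * u i := by
    intro i
    have := congrFun hBv i
    simp only [Matrix.mulVec, dotProduct, Pi.smul_apply, smul_eq_mul] at this
    have h3 := congrArg Complex.ofReal this
    push_cast at h3
    simpa [hu] using h3
  refine ⟨Sum.elim (fun i => lam * u i) u, ?_, ?_⟩
  · intro hw
    obtain ⟨i0, hi0⟩ := Function.ne_iff.mp hv
    have h2 : u i0 = 0 := congrFun hw (Sum.inr i0)
    rw [hu] at h2
    apply hi0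
    simp only [Pi.zero_apply]
    simp only [hu] at h2 ⊢
    exact_mod_cast h2
  · funext x
    cases x with
    | inl i =>
      simp only [Matrix.mulVec, dotProduct, Fintype.sum_sum_type, TAA, Matrix.map_apply,
        Matrix.fromBlocks_apply₁₁, Matrix.fromBlocks_apply₁₂, Sum.elim_inl, Sum.elim_inr,
        Pi.smul_apply, smul_eq_mul, Matrix.smul_apply]
      push_cast
      have e1 : ∑ j, ((1 + β : ℂ)) * (B i j : ℂ) * (lam * u j)
          = (1 + β : ℂ) * lam * ((μ : ℂ) * u i) := by
        rw [← hBu i, Finset.mul_sum]; congr 1; funext j; ring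
      have e2 : ∑ j, (-(β : ℂ)) * (B i j : ℂ) * u j = (-(β:ℂ)) * ((μ:ℂ) * u i) := by
        rw [← hBu i, Finset.mul_sum]; congr 1; funext j; ring
      rw [e1, e2]
      have : lam * (lam * u i) = lam ^ 2 * u i := by ring
      rw [this, hlam]
      push_cast
      ring
    | inr i =>
      simp only [Matrix.mulVec, dotProduct, Fintype.sum_sum_type, TAA, Matrix.map_apply,
        Matrix.fromBlocks_apply₂₁, Matrix.fromBlocks_apply₂₂, Sum.elim_inl, Sum.elim_inr,
        Pi.smul_apply, smul_eq_mul, Matrix.one_apply, Matrix.zero_apply]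
      simp [apply_ite, Finset.sum_ite_eq' Finset.univ i]

set_option maxHeartbeats 2000000 in
lemma exists_root (μ s β : ℝ) (hμ : μ = 1 - s ^ 2) (hs0 : 0 < s) (hs1 : s < 1) :
    ∃ lam : ℂ, lam ^ 2 = ((1 + β) * μ : ℝ) * lam - ((β * μ : ℝ) : ℂ) ∧
      1 - s ≤ ‖lam‖ ∧ (β ≠ (1 - s) / (1 + s) → 1 - s < ‖lam‖) := by
  have h1s : (0:ℝ) < 1 - s := by linarith
  have h1s' : (0:ℝ) < 1 + s := by linarith
  have hμ0 : 0 < μ := by nlinarith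
  rcases le_or_gt (β * (1 + s)) (1 - s) with hA | hC1
  · -- Case A : β ≤ β*
    have hA2 : 0 < (1 + s) - β * (1 - s) := by
      nlinarith [mul_le_mul_of_nonneg_right hA h1s.le]
    have hD0 : 0 ≤ ((1 + β) * μ) ^ 2 - 4 * (β * μ) := by
      have hid : ((1 + β) * μ) ^ 2 - 4 * (β * μ)
          = μ * (((1 - s) - β * (1 + s)) * ((1 + s) - β * (1 - s))) := by rw [hμ]; ring
      rw [hid]
      exact mul_nonneg hμ0.le (mul_nonneg (by linarith) hA2.le)
    obtain ⟨d, hd0, hd2⟩ : ∃ d : ℝ, 0 ≤ d ∧ d ^ 2 = ((1 + β) * μ) ^ 2 - 4 * (β * μ) :=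
      ⟨Real.sqrt _, Real.sqrt_nonneg _, Real.sq_sqrt hD0⟩
    obtain ⟨r, hrdef⟩ : ∃ r : ℝ, r = ((1 + β) * μ + d) / 2 := ⟨_, rfl⟩
    have hroot : r ^ 2 = (1 + β) * μ * r - β * μ := by
      rw [hrdef]; linear_combination hd2 / 4
    have hge : 1 - s ≤ r := by
      rcases le_or_gt (2 * (1 - s) - (1 + β) * μ) 0 with hc | hc
      · rw [hrdef]; linarith
      · have hts : (2 * (1 - s) - (1 + β) * μ) ^ 2 ≤ d ^ 2 := by
          rw [hd2]
          nlinarith [mul_nonneg (mul_nonneg (mul_nonneg (by norm_num : (0:ℝ) ≤ 4) hs0.le) h1s.le)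
            (by linarith : (0:ℝ) ≤ (1 - s) - β * (1 + s))]
        have htd : 2 * (1 - s) - (1 + β) * μ ≤ d := by nlinarith [hts, hd0, hc]
        rw [hrdef]; linarith
    have hstrict : β ≠ (1 - s) / (1 + s) → 1 - s < r := by
      intro hne
      have hAs : β * (1 + s) < 1 - s := by
        refine lt_of_le_of_ne hA fun h => hne ?_
        field_simp
        linarith [h]
      by_contra hcon
      push_neg at hcon
      have htd : d ≤ 2 * (1 - s) - (1 + β) * μ := by rw [hrdef] at hcon; linarith
      have hdd : d ^ 2 ≤ (2 * (1 - s) - (1 + β) * μ) ^ 2 := by nlinarith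
      rw [hd2] at hdd
      nlinarith [hdd, mul_pos (mul_pos hs0 h1s) (by linarith : 0 < (1 - s) - β * (1 + s))]
    refine ⟨(r : ℂ), ?_, ?_, ?_⟩
    · have := congrArg Complex.ofReal hroot
      push_cast at this ⊢
      exact this
    · rw [Complex.norm_real, Real.norm_eq_abs, abs_of_nonneg (by linarith)]; exact hge
    · intro hne; rw [Complex.norm_real, Real.norm_eq_abs, abs_of_nonneg (by linarith)]; exact hstrict hne
  · rcases le_or_gt (1 + s) (β * (1 - s)) with hB | hC2
    · -- Case B : β ≥ β**
      have hβ0 : 0 < β := by nlinarith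
      have hc : (1 + s) ^ 2 ≤ β * μ := by nlinarith [mul_le_mul_of_nonneg_right hB h1s'.le]
      have hD0 : 0 ≤ ((1 + β) * μ) ^ 2 - 4 * (β * μ) := by
        have hid : ((1 + β) * μ) ^ 2 - 4 * (β * μ)
            = μ * (((1 - s) - β * (1 + s)) * ((1 + s) - β * (1 - s))) := by rw [hμ]; ring
        rw [hid]
        have h1 : (1 - s) - β * (1 + s) ≤ 0 := by nlinarith
        have h2 : (1 + s) - β * (1 - s) ≤ 0 := by linarith
        exact mul_nonneg hμ0.le (by nlinarith [mul_nonneg (neg_nonneg.mpr h1) (neg_nonneg.mpr h2)])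
      obtain ⟨d, hd0, hd2⟩ : ∃ d : ℝ, 0 ≤ d ∧ d ^ 2 = ((1 + β) * μ) ^ 2 - 4 * (β * μ) :=
        ⟨Real.sqrt _, Real.sqrt_nonneg _, Real.sq_sqrt hD0⟩
      obtain ⟨r, hrdef⟩ : ∃ r : ℝ, r = ((1 + β) * μ + d) / 2 := ⟨_, rfl⟩
      have hroot : r ^ 2 = (1 + β) * μ * r - β * μ := by
        rw [hrdef]; linear_combination hd2 / 4
      have ha : 0 < (1 + β) * μ := mul_pos (by linarith) hμ0
      have hr0 : 0 < r := by rw [hrdef]; linarith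
      have h2r : (1 + β) * μ ≤ 2 * r := by rw [hrdef]; linarith
      have hr2 : β * μ ≤ r ^ 2 := by nlinarith [mul_le_mul_of_nonneg_right h2r hr0.le]
      have hstrict : 1 - s < r := by nlinarith [hr2, hc, hr0]
      refine ⟨(r : ℂ), ?_, ?_, ?_⟩
      · have := congrArg Complex.ofReal hroot
        push_cast at this ⊢
        exact this
      · rw [Complex.norm_real, Real.norm_eq_abs, abs_of_nonneg (by linarith)]; linarith
      · intro _; rw [Complex.norm_real, Real.norm_eq_abs, abs_of_nonneg (by linarith)]; exact hstrict
    · -- Case C : complex roots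
      have hDneg : ((1 + β) * μ) ^ 2 - 4 * (β * μ) < 0 := by
        have hid : ((1 + β) * μ) ^ 2 - 4 * (β * μ)
            = μ * (((1 - s) - β * (1 + s)) * ((1 + s) - β * (1 - s))) := by rw [hμ]; ring
        rw [hid]
        exact mul_neg_of_pos_of_neg hμ0
          (mul_neg_of_neg_of_pos (by linarith) (by linarith))
      obtain ⟨e, he0, he2⟩ : ∃ e : ℝ, 0 ≤ e ∧ e ^ 2 = 4 * (β * μ) - ((1 + β) * μ) ^ 2 :=
        ⟨Real.sqrt _, Real.sqrt_nonneg _, Real.sq_sqrt (by linarith)⟩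
      refine ⟨((((1 + β) * μ) / 2 : ℝ) : ℂ) + ((e / 2 : ℝ) : ℂ) * Complex.I, ?_, ?_, ?_⟩
      · have he2' : ((e : ℂ)) ^ 2 = 4 * ((β : ℂ) * (μ : ℂ)) - ((1 + (β:ℂ)) * (μ:ℂ)) ^ 2 := by
          exact_mod_cast congrArg Complex.ofReal he2
        push_cast
        linear_combination ((e:ℂ)) ^ 2 / 4 * Complex.I_sq - he2' / 4
      · have habs2 : ‖((((1 + β) * μ) / 2 : ℝ) : ℂ)
            + ((e / 2 : ℝ) : ℂ) * Complex.I‖ ^ 2 = β * μ := by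
          rw [Complex.sq_norm, Complex.normSq_add_mul_I]
          nlinarith [he2]
        have hcgt : (1 - s) ^ 2 < β * μ := by nlinarith [mul_lt_mul_of_pos_right hC1 h1s]
        have h4 : (1 - s) ^ 2 < ‖((((1 + β) * μ) / 2 : ℝ) : ℂ)
            + ((e / 2 : ℝ) : ℂ) * Complex.I‖ ^ 2 := by rw [habs2]; exact hcgt
        exact le_of_lt (lt_of_pow_lt_pow_left₀ 2 (norm_nonneg _) h4)
      · intro _
        have habs2 : ‖((((1 + β) * μ) / 2 : ℝ) : ℂ)
            + ((e / 2 : ℝ) : ℂ) * Complex.I‖ ^ 2 = β * μ := by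
          rw [Complex.sq_norm, Complex.normSq_add_mul_I]
          nlinarith [he2]
        have hcgt : (1 - s) ^ 2 < β * μ := by nlinarith [mul_lt_mul_of_pos_right hC1 h1s]
        have h4 : (1 - s) ^ 2 < ‖((((1 + β) * μ) / 2 : ℝ) : ℂ)
            + ((e / 2 : ℝ) : ℂ) * Complex.I‖ ^ 2 := by rw [habs2]; exact hcgt
        exact lt_of_pow_lt_pow_left₀ 2 (norm_nonneg _) h4



theorem stmt12 (n : ℕ) (B : Matrix (Fin n) (Fin n) ℝ) (μp : ℝ)
    (h0 : 0 < μp) (h1 : μp < 1)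
    (heig : ∃ v : Fin n → ℝ, v ≠ 0 ∧ B.mulVec v = μp • v)
    (hmax : ∀ μ : ℝ, 0 ≤ μ → (∃ v : Fin n → ℝ, v ≠ 0 ∧ B.mulVec v = μ • v) → μ ≤ μp) :
    (∀ β : ℝ, 1 - Real.sqrt (1 - μp) ≤ specRad (TAA B β)) ∧
    (∀ β : ℝ, specRad (TAA B β) = 1 - Real.sqrt (1 - μp) →
      β = (1 - Real.sqrt (1 - μp)) / (1 + Real.sqrt (1 - μp))) := by
  obtain ⟨v, hv, hBv⟩ := heig
  have hs2 : Real.sqrt (1 - μp) ^ 2 = 1 - μp := Real.sq_sqrt (by linarith)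
  have hs0 : 0 < Real.sqrt (1 - μp) := Real.sqrt_pos.mpr (by linarith)
  have hs1 : Real.sqrt (1 - μp) < 1 := by nlinarith [hs0, hs2]
  have hμeq : μp = 1 - Real.sqrt (1 - μp) ^ 2 := by linarith
  constructor
  · intro β
    obtain ⟨lam, hroot, hge, -⟩ := exists_root μp (Real.sqrt (1 - μp)) β hμeq hs0 hs1
    exact le_trans hge (le_specRad _ lam (TAA_eig B β μp v hv hBv lam hroot))
  · intro β heq
    by_contra hne
    obtain ⟨lam, hroot, -, hgt⟩ := exists_root μp (Real.sqrt (1 - μp)) β hμeq hs0 hs1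
    have h2 := le_specRad _ lam (TAA_eig B β μp v hv hBv lam hroot)
    have h3 := hgt hne
    rw [heq] at h2
    linarith
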